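/- Let k be a field, g ∈ k× a non-square, and let V = k⁴ with the two alternating bilinear forms B₁(a,b) = a₁b₃ + g⁻¹a₂b₄ − a₃b₁ − g⁻¹a₄b₂ and B₂(a,b) = a₁b₄ + a₂b₃ − a₃b₂ − a₄b₁. Then for every nonzero a ∈ V, the linear functionals B₁(a,−) and B₂(a,−) on V are linearly independent; equivalently, dim{b ∈ V : B₁(a,b) = B₂(a,b) = 0} = 2 for all nonzero a. -/

import Mathlib

open Matrix

lemma pencil_aux_indep
    {k : Type*} [Field k]
    (g : k) (hg : g ≠ 0) (hns : ∀ x : k, x ^ 2 ≠ g)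
    (a : Fin 4 → k) (ha : a ≠ 0) :
    LinearIndependent k
      ![(![-a 2, -(g⁻¹ * a 3), a 0, g⁻¹ * a 1] : Fin 4 → k),
        (![-a 3, -a 2, a 1, a 0] : Fin 4 → k)] := by
  rw [LinearIndependent.pair_iff]
  intro s t h
  have e0 := congrFun h 0
  have e1 := congrFun h 1
  have e2 := congrFun h 2
  have e3 := congrFun h 3
  simp [Matrix.vecHead, Matrix.vecTail] at e0 e1 e2 e3
  by_contra hst
  -- d := s^2 - g*t^2 ≠ 0
  have hd : s ^ 2 - g * t ^ 2 ≠ 0 := by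
    intro hdz
    have hs2 : s ^ 2 = g * t ^ 2 := sub_eq_zero.mp hdz
    by_cases ht : t = 0
    · have hs : s = 0 := by
        have : s ^ 2 = 0 := by rw [hs2, ht]; ring
        exact pow_eq_zero_iff (n := 2) (by norm_num) |>.mp this
      exact hst ⟨hs, ht⟩
    · exact hns (s / t) (by field_simp; linear_combination hs2)
  -- clear g⁻¹ from e1 and e3
  have e1' : s * a 3 + g * (t * a 2) = 0 := by
    field_simp at e1; linear_combination -e1
  have e3' : s * a 1 + g * (t * a 0) = 0 := by
    field_simp at e3; linear_combination e3
  have h0 : a 0 = 0 := by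
    have : (s ^ 2 - g * t ^ 2) * a 0 = 0 := by linear_combination s * e2 - t * e3'
    exact (mul_eq_zero.mp this).resolve_left hd
  have h1 : a 1 = 0 := by
    have : (s ^ 2 - g * t ^ 2) * a 1 = 0 := by
      linear_combination s * e3' - g * t * e2
    exact (mul_eq_zero.mp this).resolve_left hd
  have h2 : a 2 = 0 := by
    have : (s ^ 2 - g * t ^ 2) * a 2 = 0 := by
      linear_combination -s * e0 - t * e1'
    exact (mul_eq_zero.mp this).resolve_left hd
  have h3 : a 3 = 0 := by
    have : (s ^ 2 - g * t ^ 2) * a 3 = 0 := by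
      linear_combination s * e1' + g * t * e0
    exact (mul_eq_zero.mp this).resolve_left hd
  exact ha (by funext i; fin_cases i <;> assumption)

/-- let `k` be a field of characteristic `≠ 2` and `g ∈ k×` a
non-square.  With the alternating forms `B₁, B₂` on `k⁴` given by the matrices
`M₁ = [[0,0,1,0],[0,0,0,g⁻¹],[−1,0,0,0],[0,−g⁻¹,0,0]]` and
`M₂ = [[0,0,0,1],[0,0,1,0],[0,−1,0,0],[−1,0,0,0]]`, for every nonzero `a ∈ k⁴`
the functionals `B₁(a,−) = (aM₁)·(−)` and `B₂(a,−) = (aM₂)·(−)` are linearly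
independent; equivalently, `dim {b : B₁(a,b) = B₂(a,b) = 0} = 2`. -/
theorem pencil_functionals_independent
    {k : Type*} [Field k] (hchar : ringChar k ≠ 2)
    (g : k) (hg : g ≠ 0) (hns : ∀ x : k, x ^ 2 ≠ g) :
    let M₁ : Matrix (Fin 4) (Fin 4) k :=
      !![0,0,1,0; 0,0,0,g⁻¹; -1,0,0,0; 0,-g⁻¹,0,0]
    let M₂ : Matrix (Fin 4) (Fin 4) k :=
      !![0,0,0,1; 0,0,1,0; 0,-1,0,0; -1,0,0,0]
    ∀ a : Fin 4 → k, a ≠ 0 →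
      LinearIndependent k ![Matrix.vecMul a M₁, Matrix.vecMul a M₂] ∧
      Module.finrank k
        (LinearMap.ker ((Matrix.of ![Matrix.vecMul a M₁, Matrix.vecMul a M₂] :
          Matrix (Fin 2) (Fin 4) k).mulVecLin)) = 2 := by
  intro M₁ M₂ a ha
  have hv1 : Matrix.vecMul a M₁ = ![-a 2, -(g⁻¹ * a 3), a 0, g⁻¹ * a 1] := by
    funext i
    fin_cases i <;>
      simp [M₁, Matrix.vecMul, dotProduct, Fin.sum_univ_four,
        Matrix.vecHead, Matrix.vecTail] <;> ring
  have hv2 : Matrix.vecMul a M₂ = ![-a 3, -a 2, a 1, a 0] := by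
    funext i
    fin_cases i <;>
      simp [M₂, Matrix.vecMul, dotProduct, Fin.sum_univ_four,
        Matrix.vecHead, Matrix.vecTail] <;> ring
  rw [hv1, hv2]
  have hli := pencil_aux_indep g hg hns a ha
  refine ⟨hli, ?_⟩
  set A : Matrix (Fin 2) (Fin 4) k :=
    Matrix.of ![(![-a 2, -(g⁻¹ * a 3), a 0, g⁻¹ * a 1] : Fin 4 → k),
      (![-a 3, -a 2, a 1, a 0] : Fin 4 → k)] with hA
  have hrank : A.rank = 2 := by
    rw [← Matrix.rank_transpose, Matrix.rank, Matrix.range_mulVecLin]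
    change Module.finrank k (Submodule.span k (Set.range (A : Fin 2 → Fin 4 → k))) = 2
    have : Set.range (A : Fin 2 → Fin 4 → k) =
        Set.range ![(![-a 2, -(g⁻¹ * a 3), a 0, g⁻¹ * a 1] : Fin 4 → k),
          (![-a 3, -a 2, a 1, a 0] : Fin 4 → k)] := rfl
    rw [this, finrank_span_eq_card hli, Fintype.card_fin]
  have := LinearMap.finrank_range_add_finrank_ker A.mulVecLin
  rw [Module.finrank_fintype_fun_eq_card, Fintype.card_fin] at this
  have hr : Module.finrank k (LinearMap.range A.mulVecLin) = 2 := hrank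
  omega
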